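/- (Filtered backpropagation in k-space for a moving rotation axis.) Let k₀ > 0, T > 0, let α : [0,T] → ℝ and n : [0,T] → ℝ³ with ‖n(t)‖₂ = 1 be continuously differentiable, and let R(t) ∈ SO(3) be the Rodrigues rotation matrix with axis n(t) and angle α(t). Define κ(k₁,k₂) := √(k₀² − k₁² − k₂²), the open set 𝒰 := {(k₁,k₂,t) : k₁² + k₂² < k₀², 0 < t < T} ⊆ ℝ³, and Φ : 𝒰 → ℝ³, Φ(k₁,k₂,t) := R(t)(k₁, k₂, κ(k₁,k₂) − k₀)ᵀ. Assume that for every z ∈ 𝒰 the preimage Φ⁻¹({Φ(z)}) ∩ 𝒰 is finite with cardinality N(z). Let f ∈ L¹(ℝ³) and assume 𝓕f is integrable on 𝒴 := Φ(𝒰) and that z ↦ 𝓕f(Φ(z)) |det DΦ(z)| / N(z) is integrable on 𝒰. Then for every x ∈ ℝ³ the backpropagation f_bp(x) := ∫_𝒴 𝓕f(y) e^{i x·y} dy satisfies f_bp(x) = ∫_𝒰 e^{i Φ(k₁,k₂,t)·x} 𝓕f(Φ(k₁,k₂,t)) · |det DΦ(k₁,k₂,t)| / N(k₁,k₂,t)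 d(k₁,k₂,t). -/

import Mathlib

open MeasureTheory Matrix

/-- The 3D Fourier transform `𝓕f(k) = (2π)^{-3/2} ∫ f(x) e^{-i x·k} dx`. -/
noncomputable def fourier3 (f : EuclideanSpace ℝ (Fin 3) → ℂ)
    (k : EuclideanSpace ℝ (Fin 3)) : ℂ :=
  (((2 * Real.pi) ^ (-(3 : ℝ) / 2) : ℝ) : ℂ) *
    ∫ x : EuclideanSpace ℝ (Fin 3), f x * Complex.exp (-Complex.I * ((inner ℝ x k : ℝ) : ℂ))

/-- Interpret a plain vector in `Fin 3 → ℝ` as a point of Euclidean space `ℝ³`. -/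
noncomputable def toE3 (v : Fin 3 → ℝ) : EuclideanSpace ℝ (Fin 3) :=
  (WithLp.equiv 2 (Fin 3 → ℝ)).symm v

/-- The Rodrigues rotation matrix with axis `n` and angle `α`. -/
noncomputable def rodrigues (n : Fin 3 → ℝ) (α : ℝ) : Matrix (Fin 3) (Fin 3) ℝ :=
  let c := Real.cos α
  let s := Real.sin α
  !![(n 0) ^ 2 * (1 - c) + c, n 0 * n 1 * (1 - c) - n 2 * s, n 0 * n 2 * (1 - c) + n 1 * s;
     n 0 * n 1 * (1 - c) + n 2 * s, (n 1) ^ 2 * (1 - c) + c, n 1 * n 2 * (1 - c) - n 0 * s;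
     n 0 * n 2 * (1 - c) - n 1 * s, n 1 * n 2 * (1 - c) + n 0 * s, (n 2) ^ 2 * (1 - c) + c]

open Set

local notation "E3" => EuclideanSpace ℝ (Fin 3)

lemma cov_mult (U : Set E3) (hUo : IsOpen U)
    (Φ : E3 → E3)
    (hdiff : ∀ z ∈ U, ContDiffAt ℝ 1 Φ z)
    (hfin : ∀ z ∈ U, (Φ ⁻¹' {Φ z} ∩ U).Finite)
    (g : E3 → ℂ)
    (hint : IntegrableOn (fun z => g (Φ z) *
      ((|(fderiv ℝ Φ z).det| / ((Φ ⁻¹' {Φ z} ∩ U).ncard : ℝ) : ℝ) : ℂ)) U) :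
    ∫ y in Φ '' U, g y = ∫ z in U, g (Φ z) *
      ((|(fderiv ℝ Φ z).det| / ((Φ ⁻¹' {Φ z} ∩ U).ncard : ℝ) : ℝ) : ℂ) := by
  classical
  set μ : Measure E3 := volume with hμ
  set G : E3 → ℂ := fun z => g (Φ z) *
      ((|(fderiv ℝ Φ z).det| / ((Φ ⁻¹' {Φ z} ∩ U).ncard : ℝ) : ℝ) : ℂ) with hG
  set Nf : E3 → ℕ := fun y => (Φ ⁻¹' {y} ∩ U).ncard with hNf
  set h : E3 → ℂ := fun y => ((Nf y : ℝ))⁻¹ • g y with hh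
  have hmeasU : MeasurableSet U := hUo.measurableSet
  have hfd : ∀ z ∈ U, HasFDerivAt Φ (fderiv ℝ Φ z) z := fun z hz =>
    ((hdiff z hz).differentiableAt one_ne_zero).hasFDerivAt
  set S : Set E3 := U ∩ {z | (fderiv ℝ Φ z).det ≠ 0} with hS
  set K : Set E3 := U ∩ {z | (fderiv ℝ Φ z).det = 0} with hK
  have hSU : S ⊆ U := inter_subset_left
  have hKU : K ⊆ U := inter_subset_left
  have hSK : U = S ∪ K := by
    ext z; simp only [hS, hK, mem_union, mem_inter_iff, mem_setOf_eq]; tauto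
  have hdisj : Disjoint S K := by
    rw [Set.disjoint_left]; rintro z ⟨_, hz1⟩ ⟨_, hz2⟩; exact hz1 hz2
  have hmeasdet : Measurable fun z => (fderiv ℝ Φ z).det :=
    ContinuousLinearMap.continuous_det.measurable.comp (measurable_fderiv ℝ Φ)
  have hmeasS : MeasurableSet S := hmeasU.inter ((hmeasdet (measurableSet_singleton 0)).compl)
  have hmeasK : MeasurableSet K := hmeasU.inter (hmeasdet (measurableSet_singleton 0))
  -- Sard
  have hSard : μ (Φ '' K) = 0 :=
    addHaar_image_eq_zero_of_det_fderivWithin_eq_zero μ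
      (fun z hz => (hfd z (hKU hz)).hasFDerivWithinAt) (fun z hz => hz.2)
  -- G vanishes on K
  have hGK0 : ∀ z ∈ K, G z = 0 := by
    intro z hz
    have hd0 : (fderiv ℝ Φ z).det = 0 := hz.2
    simp only [hG, hd0, abs_zero, zero_div, Complex.ofReal_zero, mul_zero]
  have hRHS_SU : ∫ z in U, G z ∂μ = ∫ z in S, G z ∂μ := by
    rw [hSK, setIntegral_union hdisj hmeasK (hint.mono_set (hSK ▸ subset_union_left))
      (hint.mono_set (hSK ▸ subset_union_right))]
    rw [setIntegral_congr_fun hmeasK hGK0]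
    simp
  by_cases hSne : S.Nonempty
  swap
  · -- S empty
    rw [not_nonempty_iff_eq_empty] at hSne
    have hUK : U = K := by rw [hSK, hSne, empty_union]
    have h1 : μ (Φ '' U) = 0 := by rw [hUK]; exact hSard
    rw [show (∫ y in Φ '' U, g y ∂μ) = 0 by
      rw [Measure.restrict_eq_zero.2 h1]; exact integral_zero_measure _]
    rw [hRHS_SU, hSne]; simp
  -- local injectivity neighbourhoods
  have hloc : ∀ z, ∃ V : Set E3, z ∈ S → IsOpen V ∧ z ∈ V ∧ InjOn Φ V := by
    intro z
    by_cases hz : z ∈ S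
    · have hsd : HasStrictFDerivAt Φ (fderiv ℝ Φ z) z :=
        (hdiff z hz.1).hasStrictFDerivAt one_ne_zero
      have hs' : HasStrictFDerivAt Φ
          (((fderiv ℝ Φ z).toContinuousLinearEquivOfDetNeZero hz.2 : E3 ≃L[ℝ] E3) :
            E3 →L[ℝ] E3) z := by
        rwa [ContinuousLinearMap.coe_toContinuousLinearEquivOfDetNeZero]
      refine ⟨(hs'.toOpenPartialHomeomorph Φ).source, fun _ =>
        ⟨(hs'.toOpenPartialHomeomorph Φ).open_source, hs'.mem_toOpenPartialHomeomorph_source, ?_⟩⟩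
      have := (hs'.toOpenPartialHomeomorph Φ).injOn
      rwa [hs'.toOpenPartialHomeomorph_coe] at this
    · exact ⟨∅, fun h => absurd h hz⟩
  choose V hV using hloc
  obtain ⟨t, htS, htc, htcov⟩ := TopologicalSpace.countable_cover_nhdsWithin (f := V) (s := S)
    (fun z hz => mem_nhdsWithin_of_mem_nhds (((hV z hz).1).mem_nhds ((hV z hz).2.1)))
  have htne : t.Nonempty := by
    rcases hSne with ⟨z₀, hz₀⟩
    by_contra hte
    rw [not_nonempty_iff_eq_empty] at hte
    rw [hte] at htcov
    simpa using htcov hz₀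
  obtain ⟨e, he⟩ := htc.exists_eq_range htne
  have hea : ∀ n, e n ∈ S := fun n => htS (he ▸ mem_range_self n)
  set B : ℕ → Set E3 := fun n => S ∩ V (e n) with hB
  set W : ℕ → Set E3 := disjointed B with hW
  have hWB : ∀ n, W n ⊆ B n := disjointed_subset B
  have hWS : ∀ n, W n ⊆ S := fun n => (hWB n).trans inter_subset_left
  have hWmeas : ∀ n, MeasurableSet (W n) :=
    MeasurableSet.disjointed (fun n => hmeasS.inter ((hV (e n) (hea n)).1.measurableSet))
  have hWdisj : Pairwise (Function.onFun Disjoint W) := disjoint_disjointed B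
  have hWU : (⋃ n, W n) = S := by
    rw [hW, iUnion_disjointed]
    apply Subset.antisymm (iUnion_subset fun n => inter_subset_left)
    intro z hz
    rcases mem_iUnion₂.1 (htcov hz) with ⟨x, hxt, hzx⟩
    rcases (he ▸ hxt : x ∈ range e) with ⟨n, rfl⟩
    exact mem_iUnion.2 ⟨n, hz, hzx⟩
  have hWinj : ∀ n, InjOn Φ (W n) := fun n =>
    ((hV (e n) (hea n)).2.2).mono ((hWB n).trans inter_subset_right)
  have hWfd : ∀ n, ∀ z ∈ W n, HasFDerivWithinAt Φ (fderiv ℝ Φ z) (W n) z :=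
    fun n z hz => (hfd z (hSU (hWS n hz))).hasFDerivWithinAt
  have hWcont : ∀ n, ContinuousOn Φ (W n) := fun n z hz =>
    ((hdiff z (hSU (hWS n hz))).continuousAt).continuousWithinAt
  have hWim : ∀ n, MeasurableSet (Φ '' W n) := fun n =>
    (hWmeas n).image_of_continuousOn_injOn (hWcont n) (hWinj n)
  -- key pointwise identity
  have heq : (fun z => |(fderiv ℝ Φ z).det| • h (Φ z)) = G := by
    funext z
    simp only [hh, hG, hNf, smul_smul, Complex.real_smul]
    push_cast
    ring
  have hGW : ∀ n, IntegrableOn G (W n) μ := fun n => hint.mono_set ((hWS n).trans hSU)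
  have hhW : ∀ n, IntegrableOn h (Φ '' W n) μ := fun n =>
    (integrableOn_image_iff_integrableOn_abs_det_fderiv_smul μ (hWmeas n) (hWfd n)
      (hWinj n) h).2 (by rw [heq]; exact hGW n)
  have hcov : ∀ n, ∫ y in Φ '' W n, h y ∂μ = ∫ z in W n, G z ∂μ := by
    intro n
    rw [integral_image_eq_integral_abs_det_fderiv_smul μ (hWmeas n) (hWfd n) (hWinj n) h]
    simp only [heq]
  have hind : ∀ n, Integrable ((Φ '' W n).indicator h) μ := fun n =>
    (hhW n).integrable_indicator (hWim n)
  -- norm pointwise identity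
  have hptw : ∀ z, ENNReal.ofReal |(fderiv ℝ Φ z).det| * (‖h (Φ z)‖₊ : ENNReal)
      = (‖G z‖₊ : ENNReal) := by
    intro z
    rw [(show ∀ a : ℂ, (‖a‖₊ : ENNReal) = ENNReal.ofReal ‖a‖ from fun a => (ofReal_norm a).symm),
      (show ∀ a : ℂ, (‖a‖₊ : ENNReal) = ENNReal.ofReal ‖a‖ from fun a => (ofReal_norm a).symm),
      ← ENNReal.ofReal_mul (abs_nonneg _)]
    congr 1
    have hz' : G z = |(fderiv ℝ Φ z).det| • h (Φ z) := (congrFun heq z).symm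
    rw [hz', norm_smul (|(fderiv ℝ Φ z).det|) (h (Φ z)), Real.norm_eq_abs, abs_abs]
  have hlin : ∀ n, (∫⁻ a, ‖(Φ '' W n).indicator h a‖₊ ∂μ) = ∫⁻ z in W n, ‖G z‖₊ ∂μ := by
    intro n
    have h1 : ∀ a, (‖(Φ '' W n).indicator h a‖₊ : ENNReal)
        = (Φ '' W n).indicator (fun a => (‖h a‖₊ : ENNReal)) a := by
      intro a
      by_cases ha : a ∈ Φ '' W n
      · simp [Set.indicator_of_mem ha]
      · simp [Set.indicator_of_notMem ha]
    rw [lintegral_congr h1, lintegral_indicator (hWim n),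
      lintegral_image_eq_lintegral_abs_det_fderiv_mul μ (hWmeas n) (hWfd n) (hWinj n)]
    exact lintegral_congr hptw
  have hfinInt : (∫⁻ z in S, ‖G z‖₊ ∂μ) < ⊤ := (hint.mono_set hSU).2
  have hsum : (∑' n, ∫⁻ a, ‖(Φ '' W n).indicator h a‖₊ ∂μ) ≠ ⊤ := by
    rw [tsum_congr hlin, ← lintegral_iUnion hWmeas hWdisj, hWU]
    exact hfinInt.ne
  -- a.e. identity for the image side
  have hUSae : Φ '' U =ᵐ[μ] Φ '' S := by
    apply MeasureTheory.ae_eq_set.2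
    constructor
    · apply measure_mono_null _ hSard
      intro y hy
      rcases (by rw [hSK, image_union] at hy; exact hy.1 : y ∈ Φ '' S ∪ Φ '' K) with h' | h'
      · exact absurd h' hy.2
      · exact h'
    · have : Φ '' S \ Φ '' U = ∅ := diff_eq_empty.2 (image_mono hSU)
      rw [this]; exact measure_empty
  have hΦS : Φ '' S = ⋃ n, Φ '' W n := by rw [← image_iUnion, hWU]
  have hmeasΦS : MeasurableSet (Φ '' S) := hΦS ▸ MeasurableSet.iUnion hWim
  have h0 : ∀ᵐ y ∂μ, y ∉ Φ '' K := measure_eq_zero_iff_ae_notMem.1 hSard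
  have haeid : (Φ '' S).indicator g =ᵐ[μ]
      (fun y => ∑' n, (Φ '' W n).indicator h y) := by
    filter_upwards [h0] with y hy
    by_cases hyS : y ∈ Φ '' S
    · obtain ⟨z₁, hz₁S, hz₁y⟩ := hyS
      set F : Set E3 := Φ ⁻¹' {y} ∩ U with hF
      have hFfin : F.Finite := by
        rw [hF, ← hz₁y]; exact hfin z₁ (hSU hz₁S)
      have hFS : F ⊆ S := by
        intro z hz
        rcases (by rw [← hSK]; exact hz.2 : z ∈ S ∪ K) with h' | h'
        · exact h'
        · exact absurd ⟨z, h', hz.1⟩ hy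
      have hz₁F : z₁ ∈ F := ⟨by simp [hz₁y], hSU hz₁S⟩
      have hexists : ∀ z, z ∈ F → ∃ n, z ∈ W n := fun z hz => by
        have := hFS hz
        rw [← hWU] at this
        exact mem_iUnion.1 this
      choose! m hm using hexists
      set J : Set ℕ := {n | y ∈ Φ '' W n} with hJ
      have hJm : J = m '' F := by
        ext n
        constructor
        · rintro ⟨z, hzW, hzy⟩
          have hzF : z ∈ F := ⟨by simp [hzy], hSU (hWS n hzW)⟩
          refine ⟨z, hzF, ?_⟩
          by_contra hne
          exact Set.disjoint_left.1 (hWdisj hne) (hm z hzF) hzW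
        · rintro ⟨z, hzF, rfl⟩
          exact ⟨z, hm z hzF, hzF.1⟩
      have hinjm : InjOn m F := by
        intro a ha b hb hab
        exact hWinj (m a) (hm a ha) (hab ▸ hm b hb)
          (by rw [mem_singleton_iff.1 ha.1, mem_singleton_iff.1 hb.1])
      have hJfin : J.Finite := hJm ▸ hFfin.image m
      have hJcard : J.ncard = F.ncard := by rw [hJm, Set.ncard_image_of_injOn hinjm]
      have hterm : ∀ n, (Φ '' W n).indicator h y = J.indicator (fun _ => h y) n := by
        intro n
        by_cases hn : y ∈ Φ '' W n
        · rw [Set.indicator_of_mem hn, Set.indicator_of_mem (by exact hn)]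
        · rw [Set.indicator_of_notMem hn, Set.indicator_of_notMem (by exact hn)]
      have hNne : (F.ncard : ℝ) ≠ 0 := by
        have : 0 < F.ncard := (Set.ncard_pos hFfin).2 ⟨z₁, hz₁F⟩
        exact_mod_cast this.ne'
      have hNfy : Nf y = F.ncard := rfl
      calc (Φ '' S).indicator g y = g y := Set.indicator_of_mem (show y ∈ Φ '' S from ⟨z₁, hz₁S, hz₁y⟩) g
        _ = ∑' n, J.indicator (fun _ => h y) n := by
            rw [tsum_eq_sum (s := hJfin.toFinset)
              (fun b hb => Set.indicator_of_notMem (by simpa using hb) _)]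
            rw [Finset.sum_congr rfl (fun n hn => Set.indicator_of_mem (by
              simpa using hn) _), Finset.sum_const,
              ← Set.ncard_eq_toFinset_card J hJfin, hJcard]
            rw [hh]
            simp only [hNfy]
            rw [← Nat.cast_smul_eq_nsmul ℝ, smul_smul, mul_inv_cancel₀ hNne, one_smul]
        _ = ∑' n, (Φ '' W n).indicator h y := by rw [tsum_congr hterm]
    · rw [Set.indicator_of_notMem hyS]
      have : ∀ n, (Φ '' W n).indicator h y = 0 := fun n =>
        Set.indicator_of_notMem (fun hmem => hyS ((image_mono (hWS n)) hmem)) _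
      simp [this]
  -- assemble
  calc ∫ y in Φ '' U, g y ∂μ
      = ∫ y in Φ '' S, g y ∂μ := by rw [Measure.restrict_congr_set hUSae]
    _ = ∫ y, (Φ '' S).indicator g y ∂μ := (integral_indicator hmeasΦS).symm
    _ = ∫ y, ∑' n, (Φ '' W n).indicator h y ∂μ := integral_congr_ae haeid
    _ = ∑' n, ∫ y, (Φ '' W n).indicator h y ∂μ :=
        integral_tsum (fun n => (hind n).aestronglyMeasurable) hsum
    _ = ∑' n, ∫ y in Φ '' W n, h y ∂μ := by
        exact tsum_congr (fun n => integral_indicator (hWim n))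
    _ = ∑' n, ∫ z in W n, G z ∂μ := tsum_congr hcov
    _ = ∫ z in ⋃ n, W n, G z ∂μ :=
        (integral_iUnion hWmeas hWdisj (by rw [hWU]; exact hint.mono_set hSU)).symm
    _ = ∫ z in S, G z ∂μ := by rw [hWU]
    _ = ∫ z in U, G z ∂μ := hRHS_SU.symm

set_option maxHeartbeats 2000000 in
lemma phi_smooth (k₀ T : ℝ) (α : ℝ → ℝ) (nv : ℝ → Fin 3 → ℝ)
    (hα : ContDiffOn ℝ 1 α (Set.Icc (0:ℝ) T))
    (hnv : ∀ i, ContDiffOn ℝ 1 (fun t => nv t i) (Set.Icc (0:ℝ) T))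
    (z : E3) (h1 : (z 0)^2 + (z 1)^2 < k₀^2) (h2 : z 2 ∈ Set.Ioo (0:ℝ) T) :
    ContDiffAt ℝ 1 (fun w : E3 => toE3 (rodrigues (nv (w 2)) (α (w 2)) *ᵥ
      ![w 0, w 1, Real.sqrt (k₀ ^ 2 - (w 0) ^ 2 - (w 1) ^ 2) - k₀])) z := by
  have hIcc : Set.Icc (0:ℝ) T ∈ nhds (z 2) := Icc_mem_nhds h2.1 h2.2
  have p : ∀ i, ContDiffAt ℝ 1 (fun w : E3 => w i) z := fun i =>
    (EuclideanSpace.proj (𝕜 := ℝ) i).contDiff.contDiffAt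
  have hα' : ContDiffAt ℝ 1 (fun w : E3 => α (w 2)) z :=
    (hα.contDiffAt hIcc).comp z (p 2)
  have hn : ∀ i, ContDiffAt ℝ 1 (fun w : E3 => nv (w 2) i) z := fun i =>
    ContDiffAt.comp (g := fun t => nv t i) z ((hnv i).contDiffAt hIcc) (p 2)
  have hn0 := hn 0; have hn1 := hn 1; have hn2 := hn 2
  have hcos : ContDiffAt ℝ 1 (fun w : E3 => Real.cos (α (w 2))) z :=
    Real.contDiff_cos.contDiffAt.comp z hα'
  have hsin : ContDiffAt ℝ 1 (fun w : E3 => Real.sin (α (w 2))) z :=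
    Real.contDiff_sin.contDiffAt.comp z hα'
  have p0 := p 0; have p1 := p 1
  have harg : ContDiffAt ℝ 1 (fun w : E3 => k₀ ^ 2 - (w 0) ^ 2 - (w 1) ^ 2) z :=
    (contDiffAt_const.sub ((p 0).pow 2)).sub ((p 1).pow 2)
  have hsq : ContDiffAt ℝ 1
      (fun w : E3 => Real.sqrt (k₀ ^ 2 - (w 0) ^ 2 - (w 1) ^ 2)) z :=
    (Real.contDiffAt_sqrt (by nlinarith : k₀ ^ 2 - (z 0) ^ 2 - (z 1) ^ 2 ≠ 0)).comp z harg
  have htoE3 : ContDiff ℝ 1 toE3 := by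
    have : toE3 = ⇑((EuclideanSpace.equiv (Fin 3) ℝ).symm) := rfl
    rw [this]
    exact (EuclideanSpace.equiv (Fin 3) ℝ).symm.contDiff
  refine htoE3.contDiffAt.comp z ?_
  rw [contDiffAt_pi]
  intro i
  simp only [Matrix.mulVec, dotProduct, Fin.sum_univ_three, rodrigues,
    Matrix.cons_val', Matrix.cons_val_zero, Matrix.cons_val_one, Matrix.head_cons,
    Matrix.empty_val', Matrix.cons_val_fin_one, Matrix.of_apply, Matrix.head_fin_const]
  fin_cases i <;>
    simp only [Matrix.cons_val_zero, Matrix.cons_val_one, Matrix.head_cons, Fin.isValue,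
      Matrix.cons_val_two, Matrix.tail_cons] <;>
    repeat' first
      | exact hcos | exact hsin | exact hn0 | exact hn1 | exact hn2
      | exact p0 | exact p1 | exact hsq | exact contDiffAt_const
      | apply ContDiffAt.add | apply ContDiffAt.sub | apply ContDiffAt.mul
      | apply ContDiffAt.pow | apply ContDiffAt.neg

theorem stmt10 (k₀ T : ℝ) (hk₀ : 0 < k₀) (hT : 0 < T)
    (α : ℝ → ℝ) (nv : ℝ → Fin 3 → ℝ)
    (hα : ContDiffOn ℝ 1 α (Set.Icc (0 : ℝ) T))
    (hnv : ∀ i, ContDiffOn ℝ 1 (fun t => nv t i) (Set.Icc (0 : ℝ) T))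
    (hunit : ∀ t ∈ Set.Icc (0 : ℝ) T, (nv t 0) ^ 2 + (nv t 1) ^ 2 + (nv t 2) ^ 2 = 1)
    -- the open parameter domain 𝒰 ⊆ ℝ³, with coordinates (k₁, k₂, t)
    (U : Set (EuclideanSpace ℝ (Fin 3)))
    (hU : U = {z : EuclideanSpace ℝ (Fin 3) |
      (z 0) ^ 2 + (z 1) ^ 2 < k₀ ^ 2 ∧ z 2 ∈ Set.Ioo (0 : ℝ) T})
    -- the map Φ(k₁,k₂,t) = R(t) (k₁, k₂, κ(k₁,k₂) - k₀)ᵀ covering the k-space domain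
    (Φ : EuclideanSpace ℝ (Fin 3) → EuclideanSpace ℝ (Fin 3))
    (hΦ : ∀ z : EuclideanSpace ℝ (Fin 3), Φ z = toE3 (rodrigues (nv (z 2)) (α (z 2)) *ᵥ
      ![z 0, z 1, Real.sqrt (k₀ ^ 2 - (z 0) ^ 2 - (z 1) ^ 2) - k₀]))
    (hfin : ∀ z ∈ U, (Φ ⁻¹' {Φ z} ∩ U).Finite)
    (f : EuclideanSpace ℝ (Fin 3) → ℂ) (hf : Integrable f)
    (hFint : IntegrableOn (fourier3 f) (Φ '' U))
    (hint : IntegrableOn (fun z =>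
      fourier3 f (Φ z) *
        ((|(fderiv ℝ Φ z).det| / ((Φ ⁻¹' {Φ z} ∩ U).ncard : ℝ) : ℝ) : ℂ)) U)
    (x : EuclideanSpace ℝ (Fin 3)) :
    ∫ y in Φ '' U, fourier3 f y * Complex.exp (Complex.I * ((inner ℝ x y : ℝ) : ℂ)) =
      ∫ z in U, Complex.exp (Complex.I * ((inner ℝ (Φ z) x : ℝ) : ℂ)) * fourier3 f (Φ z) *
        ((|(fderiv ℝ Φ z).det| / ((Φ ⁻¹' {Φ z} ∩ U).ncard : ℝ) : ℝ) : ℂ) := by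
  classical
  have hΦfun : Φ = fun z => toE3 (rodrigues (nv (z 2)) (α (z 2)) *ᵥ
      ![z 0, z 1, Real.sqrt (k₀ ^ 2 - (z 0) ^ 2 - (z 1) ^ 2) - k₀]) := funext hΦ
  have hUopen : IsOpen U := by
    rw [hU]
    have hrw : {z : E3 | (z 0) ^ 2 + (z 1) ^ 2 < k₀ ^ 2 ∧ z 2 ∈ Set.Ioo (0:ℝ) T}
        = ((fun z : E3 => (z 0) ^ 2 + (z 1) ^ 2) ⁻¹' Set.Iio (k₀ ^ 2)) ∩
          ((fun z : E3 => z 2) ⁻¹' Set.Ioo 0 T) := by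
      ext z; simp [Set.mem_setOf_eq]
    rw [hrw]
    have hc : ∀ i : Fin 3, Continuous (fun z : E3 => z i) :=
      fun i => (EuclideanSpace.proj (𝕜 := ℝ) i).continuous
    exact (IsOpen.preimage (((hc 0).pow 2).add ((hc 1).pow 2)) isOpen_Iio).inter
      (IsOpen.preimage (hc 2) isOpen_Ioo)
  have hdiff : ∀ z ∈ U, ContDiffAt ℝ 1 Φ z := by
    intro z hz
    rw [hU] at hz
    rw [hΦfun]
    exact phi_smooth k₀ T α nv hα hnv z hz.1 hz.2
  set g : E3 → ℂ :=
    fun y => fourier3 f y * Complex.exp (Complex.I * ((inner ℝ x y : ℝ) : ℂ)) with hg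
  have hexpc : Continuous fun y : E3 =>
      Complex.exp (Complex.I * ((inner ℝ x y : ℝ) : ℂ)) :=
    Complex.continuous_exp.comp (continuous_const.mul
      (Complex.continuous_ofReal.comp (Continuous.inner continuous_const continuous_id)))
  have hΦcont : ContinuousOn Φ U := fun z hz => (hdiff z hz).continuousAt.continuousWithinAt
  have hexpm : AEStronglyMeasurable
      (fun z => Complex.exp (Complex.I * ((inner ℝ x (Φ z) : ℝ) : ℂ)))
      (volume.restrict U) :=
    (hexpc.comp_continuousOn hΦcont).aestronglyMeasurable hUopen.measurableSet
  have hbd : ∀ z, ‖Complex.exp (Complex.I * ((inner ℝ x (Φ z) : ℝ) : ℂ))‖ ≤ 1 := by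
    intro z
    have hre : (Complex.I * ((inner ℝ x (Φ z) : ℝ) : ℂ)).re = 0 := by simp
    rw [Complex.norm_exp, hre, Real.exp_zero]
  have hint' : IntegrableOn (fun z => g (Φ z) *
      ((|(fderiv ℝ Φ z).det| / ((Φ ⁻¹' {Φ z} ∩ U).ncard : ℝ) : ℝ) : ℂ)) U := by
    have h2 := hint.bdd_mul hexpm (Filter.Eventually.of_forall hbd)
    exact h2.congr (Filter.Eventually.of_forall fun z => by simp only [hg]; ring)
  rw [cov_mult U hUopen Φ hdiff hfin g hint']
  refine integral_congr_ae (Filter.Eventually.of_forall fun z => ?_)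
  simp only [hg]
  rw [real_inner_comm (Φ z) x]
  ring
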